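/- Let D be a finite set, M a DSM on D, and U, X ⊆ D such that M contains a U-surjective shop and an X-total shop, |U| is minimal among cardinalities of subsets U' of D such that M contains a U'-surjective shop, |X| is minimal among cardinalities of subsets X' of D such that M contains an X'-total shop, subject to these minimality conditions |U ∩ X| is maximal, and moreover U ∪ X = D (M is reduced). Then every shop f ∈ M is in 3-permuted form: there exist a permutation ζ of U ∩ X, a permutation χ of X \ U and a permutation υ of U \ X such that f(y) = {ζ(y)} for every y ∈ U ∩ X, f(x) = {χ(x)} for every x ∈ X \ U, and f(u) = {υ(u)} ∪ X_u with X_u ⊆ X \ U for every u ∈ U \ X. Moreover, every U-X-shop f ∈ M additionally satisfies f(U \ X) ∩ X = ⋃_{u ∈ U \ X} X_u = X \ U. -/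

import Mathlib

namespace MC

/-- A shop (surjective hyper-operation) on `D`: a total and surjective
hyper-operation `D → Set D`. -/
structure Shop (D : Type) where
  f : D → Set D
  total : ∀ a : D, (f a).Nonempty
  surj : ∀ b : D, ∃ a : D, b ∈ f a

variable {D : Type}

/-- Composition of shops: `(comp g f) x = g (f x)`. -/
def Shop.comp (g f : Shop D) : Shop D where
  f := fun x => {z | ∃ y ∈ f.f x, z ∈ g.f y}
  total := by
    intro a
    obtain ⟨y, hy⟩ := f.total a
    obtain ⟨z, hz⟩ := g.total y
    exact ⟨z, y, hy, hz⟩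
  surj := by
    intro b
    obtain ⟨y, hy⟩ := g.surj b
    obtain ⟨x, hx⟩ := f.surj y
    exact ⟨x, y, hx, hy⟩

/-- The identity shop `x ↦ {x}`. -/
def Shop.id : Shop D where
  f := fun x => {x}
  total := fun a => ⟨a, rfl⟩
  surj := fun b => ⟨b, rfl⟩

/-- Iterates of a shop: `pow f 0 = id` and `pow f (n+1) = f ∘ (pow f n)`. -/
def Shop.pow (f : Shop D) : ℕ → Shop D
  | 0 => Shop.id
  | n + 1 => Shop.comp f (f.pow n)

/-- `f` is `U`-surjective (a `U`-shop): `f(U) = D`. -/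
def Shop.USurj (f : Shop D) (U : Set D) : Prop :=
  ∀ b : D, ∃ u ∈ U, b ∈ f.f u

/-- `f` is `X`-total (an `X`-shop): `f⁻¹(X) = D`. -/
def Shop.XTotal (f : Shop D) (X : Set D) : Prop :=
  ∀ a : D, ∃ x ∈ X, x ∈ f.f a

end MC

namespace MC

/-- A down-shop-monoid (DSM): a set of shops containing the identity shop,
closed under composition, and closed under sub-shops. -/
def IsDSM {D : Type} (M : Set (Shop D)) : Prop :=
  Shop.id ∈ M ∧
  (∀ f ∈ M, ∀ g ∈ M, Shop.comp g f ∈ M) ∧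
  ∀ f ∈ M, ∀ g : Shop D, (∀ x : D, g.f x ⊆ f.f x) → g ∈ M

end MC

namespace MC

/-- at most one element of `U` in each `f a` -/
lemma lem1 {D : Type} [Finite D] {M : Set (Shop D)} (hM : IsDSM M)
    {U : Set D} (hU : ∃ f ∈ M, f.USurj U)
    (hUmin : ∀ U' : Set D, (∃ f ∈ M, f.USurj U') → U.ncard ≤ U'.ncard)
    {f : Shop D} (hf : f ∈ M) {a u u' : D} (hu : u ∈ U) (hu' : u' ∈ U)
    (h1 : u ∈ f.f a) (h2 : u' ∈ f.f a) : u = u' := by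
  classical
  by_contra hne
  obtain ⟨s, hs, hsU⟩ := hU
  set c : D → D := fun v => if v = u ∨ v = u' then a else (f.surj v).choose with hc
  have hcv : ∀ v, v ∈ f.f (c v) := by
    intro v
    by_cases h : v = u ∨ v = u'
    · simp only [hc, if_pos h]
      rcases h with rfl | rfl
      · exact h1
      · exact h2
    · simp only [hc, if_neg h]
      exact (f.surj v).choose_spec
  have hcomp : Shop.comp s f ∈ M := hM.2.1 f hf s hs
  have hsurj : (Shop.comp s f).USurj (c '' U) := by
    intro b
    obtain ⟨v, hv, hbv⟩ := hsU b
    exact ⟨c v, ⟨v, hv, rfl⟩, v, hcv v, hbv⟩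
  have hle := hUmin (c '' U) ⟨_, hcomp, hsurj⟩
  have himg : c '' U = c '' (U \ {u'}) := by
    apply Set.Subset.antisymm
    · rintro _ ⟨v, hv, rfl⟩
      by_cases hv' : v = u'
      · subst hv'
        refine ⟨u, ⟨hu, by simpa using hne⟩, ?_⟩
        simp [hc]
      · exact ⟨v, ⟨hv, hv'⟩, rfl⟩
    · exact Set.image_mono Set.diff_subset
  have h1' : (c '' (U \ {u'})).ncard ≤ (U \ {u'}).ncard :=
    Set.ncard_image_le (Set.toFinite _)
  have h2' : (U \ {u'}).ncard < U.ncard :=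
    Set.ncard_diff_singleton_lt_of_mem hu' (Set.toFinite _)
  rw [himg] at hle
  omega

/-- images of distinct elements of `X` are disjoint -/
lemma lem2 {D : Type} [Finite D] {M : Set (Shop D)} (hM : IsDSM M)
    {X : Set D} (hX : ∃ f ∈ M, f.XTotal X)
    (hXmin : ∀ X' : Set D, (∃ f ∈ M, f.XTotal X') → X.ncard ≤ X'.ncard)
    {f : Shop D} (hf : f ∈ M) {x x' z : D} (hx : x ∈ X) (hx' : x' ∈ X)
    (h1 : z ∈ f.f x) (h2 : z ∈ f.f x') : x = x' := by
  classical
  by_contra hne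
  obtain ⟨t, ht, htX⟩ := hX
  set c : D → D := fun v => if v = x ∨ v = x' then z else (f.total v).choose with hc
  have hcv : ∀ v, c v ∈ f.f v := by
    intro v
    by_cases h : v = x ∨ v = x'
    · simp only [hc, if_pos h]
      rcases h with rfl | rfl
      · exact h1
      · exact h2
    · simp only [hc, if_neg h]
      exact (f.total v).choose_spec
  have hcomp : Shop.comp f t ∈ M := hM.2.1 t ht f hf
  have htot : (Shop.comp f t).XTotal (c '' X) := by
    intro a
    obtain ⟨v, hv, hvt⟩ := htX a
    exact ⟨c v, ⟨v, hv, rfl⟩, v, hvt, hcv v⟩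
  have hle := hXmin (c '' X) ⟨_, hcomp, htot⟩
  have himg : c '' X = c '' (X \ {x'}) := by
    apply Set.Subset.antisymm
    · rintro _ ⟨v, hv, rfl⟩
      by_cases hv' : v = x'
      · subst hv'
        refine ⟨x, ⟨hx, by simpa using hne⟩, ?_⟩
        simp [hc]
      · exact ⟨v, ⟨hv, hv'⟩, rfl⟩
    · exact Set.image_mono Set.diff_subset
  have h1' : (c '' (X \ {x'})).ncard ≤ (X \ {x'}).ncard :=
    Set.ncard_image_le (Set.toFinite _)
  have h2' : (X \ {x'}).ncard < X.ncard :=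
    Set.ncard_diff_singleton_lt_of_mem hx' (Set.toFinite _)
  rw [himg] at hle
  omega


/-- structural lemma: every shop of `M` is "almost 3-permuted" with respect to
some `S ⊆ X` of size `|U ∩ X|`. -/
lemma struc {D : Type} [Finite D] {M : Set (Shop D)} (hM : IsDSM M)
    {U X : Set D}
    (hU : ∃ f ∈ M, f.USurj U) (hX : ∃ f ∈ M, f.XTotal X)
    (hUmin : ∀ U' : Set D, (∃ f ∈ M, f.USurj U') → U.ncard ≤ U'.ncard)
    (hXmin : ∀ X' : Set D, (∃ f ∈ M, f.XTotal X') → X.ncard ≤ X'.ncard)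
    (hmax : ∀ U' X' : Set D, (∃ f ∈ M, f.USurj U') → (∃ f ∈ M, f.XTotal X') →
      U'.ncard = U.ncard → X'.ncard = X.ncard →
      (U' ∩ X').ncard ≤ (U ∩ X).ncard)
    (hred : U ∪ X = Set.univ)
    {f : Shop D} (hf : f ∈ M) :
    ∃ F : D → D, ∃ S : Set D,
      S ⊆ X ∧
      Set.InjOn F X ∧
      (∀ x ∈ X, f.f x = {F x}) ∧
      (∀ x ∈ S, F x ∈ U) ∧
      (∀ x ∈ X \ S, F x ∈ X \ U) ∧
      F '' (X \ S) = X \ U ∧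
      S.ncard = (U ∩ X).ncard ∧
      (∀ a ∈ U \ X, F a ∈ f.f a ∧ F a ∈ U ∧ F a ∉ F '' S) ∧
      Set.InjOn F (U \ X) ∧
      F '' (U \ X) = U \ F '' S ∧
      (∀ a ∈ U \ X, f.f a = insert (F a) (f.f a ∩ (X \ U))) := by
  classical
  have hUorX : ∀ z : D, z ∉ U → z ∈ X := by
    intro z hz
    have : z ∈ U ∪ X := hred ▸ Set.mem_univ z
    exact this.resolve_left hz
  have hXorU : ∀ z : D, z ∉ X → z ∈ U := by
    intro z hz
    have : z ∈ U ∪ X := hred ▸ Set.mem_univ z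
    exact this.resolve_right hz
  obtain ⟨t, ht, htX⟩ := hX
  set F : D → D := fun v =>
    if h : (f.f v ∩ U).Nonempty then h.choose else (f.total v).choose with hFdef
  have hF1 : ∀ v, F v ∈ f.f v := by
    intro v
    by_cases h : (f.f v ∩ U).Nonempty
    · simp only [hFdef, dif_pos h]; exact h.choose_spec.1
    · simp only [hFdef, dif_neg h]; exact (f.total v).choose_spec
  have hF2 : ∀ v, (f.f v ∩ U).Nonempty → F v ∈ U := by
    intro v h
    simp only [hFdef, dif_pos h]; exact h.choose_spec.2
  set S : Set D := {x ∈ X | F x ∈ U} with hSdef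
  have hSX : S ⊆ X := Set.sep_subset _ _
  have hInjX : Set.InjOn F X := by
    intro x hx x' hx' h
    exact lem2 hM ⟨t, ht, htX⟩ hXmin hf hx hx' (hF1 x) (h ▸ hF1 x')
  have hSmap : ∀ x ∈ S, F x ∈ U := fun x hx => hx.2
  have hBmap : ∀ x ∈ X \ S, F x ∈ X \ U := by
    intro x hx
    have hnU : F x ∉ U := fun h => hx.2 ⟨hx.1, h⟩
    exact ⟨hUorX _ hnU, hnU⟩
  -- the image of X is a minimal total set
  have hXtot' : ∃ g ∈ M, g.XTotal (F '' X) := by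
    refine ⟨Shop.comp f t, hM.2.1 t ht f hf, ?_⟩
    intro a
    obtain ⟨v, hv, hvt⟩ := htX a
    exact ⟨F v, ⟨v, hv, rfl⟩, v, hvt, hF1 v⟩
  have hmaxle := hmax U (F '' X) hU hXtot' rfl (Set.ncard_image_of_injOn hInjX)
  have hSsub : F '' S ⊆ U ∩ F '' X := by
    rintro _ ⟨x, hx, rfl⟩
    exact ⟨hSmap x hx, x, hSX hx, rfl⟩
  have hScard_le : S.ncard ≤ (U ∩ X).ncard := by
    calc S.ncard = (F '' S).ncard := (Set.ncard_image_of_injOn (hInjX.mono hSX)).symm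
    _ ≤ (U ∩ F '' X).ncard := Set.ncard_le_ncard hSsub (Set.toFinite _)
    _ ≤ (U ∩ X).ncard := hmaxle
  have hXSsub : F '' (X \ S) ⊆ X \ U := by
    rintro _ ⟨x, hx, rfl⟩; exact hBmap x hx
  have hXSinj : Set.InjOn F (X \ S) := hInjX.mono Set.diff_subset
  have e1 : (X \ S).ncard + S.ncard = X.ncard :=
    Set.ncard_diff_add_ncard_of_subset hSX (Set.toFinite _)
  have hXdiff : X \ (U ∩ X) = X \ U := by ext z; simp
  have e2 : (X \ U).ncard + (U ∩ X).ncard = X.ncard := by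
    rw [← hXdiff]
    exact Set.ncard_diff_add_ncard_of_subset Set.inter_subset_right (Set.toFinite _)
  have c1 : (X \ S).ncard ≤ (X \ U).ncard := by
    calc (X \ S).ncard = (F '' (X \ S)).ncard := (Set.ncard_image_of_injOn hXSinj).symm
    _ ≤ (X \ U).ncard := Set.ncard_le_ncard hXSsub (Set.toFinite _)
  have hScard : S.ncard = (U ∩ X).ncard := by omega
  have hXSeq : F '' (X \ S) = X \ U := by
    exact Set.eq_of_subset_of_ncard_le hXSsub
      (by rw [Set.ncard_image_of_injOn hXSinj]; omega) (Set.toFinite _)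
  -- single-valuedness on X
  have hBonly : ∀ x ∈ X, ∀ z, z ∈ f.f x → z ∈ X \ U → x ∈ X \ S ∧ z = F x := by
    intro x hx z hz hzB
    have : z ∈ F '' (X \ S) := hXSeq ▸ hzB
    obtain ⟨x1, hx1, hzx1⟩ := this
    have hx1x : x1 = x :=
      lem2 hM ⟨t, ht, htX⟩ hXmin hf hx1.1 hx (hzx1 ▸ hF1 x1) hz
    subst hx1x
    exact ⟨hx1, hzx1.symm⟩
  have hsingle : ∀ x ∈ X, f.f x = {F x} := by
    intro x hx
    apply Set.eq_singleton_iff_unique_mem.mpr ⟨hF1 x, ?_⟩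
    intro z hz
    by_cases hzU : z ∈ U
    · have hFx : F x ∈ U := hF2 x ⟨z, hz, hzU⟩
      exact lem1 hM hU hUmin hf hzU hFx hz (hF1 x)
    · exact (hBonly x hx z hz ⟨hUorX z hzU, hzU⟩).2
  -- preimage side
  set R : Set D := F '' S with hRdef
  have hRU : R ⊆ U := by rintro _ ⟨x, hx, rfl⟩; exact hSmap x hx
  have hRcard : R.ncard = (U ∩ X).ncard := by
    rw [hRdef, Set.ncard_image_of_injOn (hInjX.mono hSX)]; exact hScard
  set G : D → D := fun v => (f.surj v).choose with hGdef
  have hGv : ∀ v, v ∈ f.f (G v) := fun v => (f.surj v).choose_spec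
  have hInjG : Set.InjOn G U := by
    intro u hu u' hu' h
    exact lem1 hM hU hUmin hf hu hu' (hGv u) (h ▸ hGv u')
  have hpre : ∀ u ∈ U \ R, G u ∈ U \ X := by
    intro u hu
    by_cases hGX : G u ∈ X
    · exfalso
      have hsing := hsingle _ hGX
      have : u = F (G u) := by
        have := hGv u; rw [hsing] at this; exact this
      have hGS : G u ∈ S := ⟨hGX, this ▸ hu.1⟩
      exact hu.2 ⟨G u, hGS, this.symm⟩
    · exact ⟨hXorU _ hGX, hGX⟩
  have hGsub : G '' (U \ R) ⊆ U \ X := by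
    rintro _ ⟨u, hu, rfl⟩; exact hpre u hu
  have e3 : (U \ R).ncard + R.ncard = U.ncard :=
    Set.ncard_diff_add_ncard_of_subset hRU (Set.toFinite _)
  have hUdiff : U \ (U ∩ X) = U \ X := by ext z; simp
  have e4 : (U \ X).ncard + (U ∩ X).ncard = U.ncard := by
    rw [← hUdiff]
    exact Set.ncard_diff_add_ncard_of_subset Set.inter_subset_left (Set.toFinite _)
  have hInjGUR : Set.InjOn G (U \ R) := hInjG.mono Set.diff_subset
  have hGeq : G '' (U \ R) = U \ X := by
    refine Set.eq_of_subset_of_ncard_le hGsub ?_ (Set.toFinite _)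
    rw [Set.ncard_image_of_injOn hInjGUR]; omega
  have hA : ∀ a ∈ U \ X, F a ∈ f.f a ∧ F a ∈ U ∧ F a ∉ R := by
    intro a ha
    have : a ∈ G '' (U \ R) := hGeq ▸ ha
    obtain ⟨u, hu, hGu⟩ := this
    have hua : u ∈ f.f a := hGu ▸ hGv u
    have hne : (f.f a ∩ U).Nonempty := ⟨u, hua, hu.1⟩
    have hFaU : F a ∈ U := hF2 a hne
    have hFau : F a = u := lem1 hM hU hUmin hf hFaU hu.1 (hF1 a) hua
    exact ⟨hF1 a, hFaU, hFau ▸ hu.2⟩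
  have hInjA : Set.InjOn F (U \ X) := by
    intro a ha a' ha' hFeq
    obtain ⟨u, hu, hGu⟩ := (hGeq ▸ ha : a ∈ G '' (U \ R))
    obtain ⟨u', hu', hGu'⟩ := (hGeq ▸ ha' : a' ∈ G '' (U \ R))
    have h1 : u = F a :=
      lem1 hM hU hUmin hf hu.1 (hA a ha).2.1 (hGu ▸ hGv u) (hA a ha).1
    have h2 : u' = F a' :=
      lem1 hM hU hUmin hf hu'.1 (hA a' ha').2.1 (hGu' ▸ hGv u') (hA a' ha').1
    have : u = u' := by rw [h1, h2, hFeq]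
    rw [← hGu, ← hGu', this]
  have hFAsub : F '' (U \ X) ⊆ U \ R := by
    rintro _ ⟨a, ha, rfl⟩; exact ⟨(hA a ha).2.1, (hA a ha).2.2⟩
  have hFAeq : F '' (U \ X) = U \ R := by
    refine Set.eq_of_subset_of_ncard_le hFAsub ?_ (Set.toFinite _)
    rw [Set.ncard_image_of_injOn hInjA]; omega
  have hform : ∀ a ∈ U \ X, f.f a = insert (F a) (f.f a ∩ (X \ U)) := by
    intro a ha
    ext z
    simp only [Set.mem_insert_iff, Set.mem_inter_iff]
    constructor
    · intro hz
      by_cases hzU : z ∈ U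
      · exact Or.inl (lem1 hM hU hUmin hf hzU (hA a ha).2.1 hz (hA a ha).1)
      · exact Or.inr ⟨hz, hUorX z hzU, hzU⟩
    · rintro (rfl | ⟨hz, _⟩)
      · exact (hA a ha).1
      · exact hz
  exact ⟨F, S, hSX, hInjX, hsingle, hSmap, hBmap, hXSeq, hScard, hA, hInjA, hFAeq, hform⟩


/-- strict 3-permuted form for `U`-`X`-shops. -/
lemma strucUX {D : Type} [Finite D] {M : Set (Shop D)} (hM : IsDSM M)
    {U X : Set D}
    (hU : ∃ f ∈ M, f.USurj U) (hX : ∃ f ∈ M, f.XTotal X)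
    (hUmin : ∀ U' : Set D, (∃ f ∈ M, f.USurj U') → U.ncard ≤ U'.ncard)
    (hXmin : ∀ X' : Set D, (∃ f ∈ M, f.XTotal X') → X.ncard ≤ X'.ncard)
    (hmax : ∀ U' X' : Set D, (∃ f ∈ M, f.USurj U') → (∃ f ∈ M, f.XTotal X') →
      U'.ncard = U.ncard → X'.ncard = X.ncard →
      (U' ∩ X').ncard ≤ (U ∩ X).ncard)
    (hred : U ∪ X = Set.univ)
    {f : Shop D} (hf : f ∈ M) (hfU : f.USurj U) (hfX : f.XTotal X) :
    ∃ F : D → D,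
      Set.InjOn F X ∧
      (∀ x ∈ X, f.f x = {F x}) ∧
      (∀ y ∈ U ∩ X, F y ∈ U ∩ X) ∧
      F '' (U ∩ X) = U ∩ X ∧
      (∀ b ∈ X \ U, F b ∈ X \ U) ∧
      F '' (X \ U) = X \ U ∧
      Set.InjOn F (U \ X) ∧
      (∀ a ∈ U \ X, F a ∈ f.f a ∧ F a ∈ U \ (U ∩ X)) ∧
      F '' (U \ X) = U \ (U ∩ X) ∧
      (∀ a ∈ U \ X, f.f a = insert (F a) (f.f a ∩ (X \ U))) := by
  obtain ⟨F, S, hSX, hInjX, hsingle, hSmap, hBmap, hXSeq, hScard, hA, hInjA, hFAeq, hform⟩ :=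
    struc hM hU hX hUmin hXmin hmax hred hf
  -- F '' S = U ∩ X
  have hFSsub : F '' S ⊆ U ∩ X := by
    rintro _ ⟨x, hx, rfl⟩
    obtain ⟨w, hwX, hwf⟩ := hfX x
    rw [hsingle x (hSX hx)] at hwf
    exact ⟨hSmap x hx, hwf ▸ hwX⟩
  have hFScard : (F '' S).ncard = S.ncard := Set.ncard_image_of_injOn (hInjX.mono hSX)
  have hFSeq : F '' S = U ∩ X :=
    Set.eq_of_subset_of_ncard_le hFSsub (by omega) (Set.toFinite _)
  -- S = U ∩ X
  have hIsub : U ∩ X ⊆ F '' (S ∩ (U ∩ X)) := by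
    intro y hy
    obtain ⟨w, hwU, hwf⟩ := hfU y
    by_cases hwX : w ∈ X
    · have hsw := hsingle w hwX
      rw [hsw] at hwf
      have hwS : w ∈ S := by
        by_contra hwS
        have := hBmap w ⟨hwX, hwS⟩
        rw [← hwf] at this
        exact this.2 hy.1
      exact ⟨w, ⟨hwS, hwU, hwX⟩, hwf.symm⟩
    · exfalso
      rw [hform w ⟨hwU, hwX⟩] at hwf
      rcases hwf with rfl | ⟨_, hyB⟩
      · exact (hA w ⟨hwU, hwX⟩).2.2 (hFSeq ▸ hy)
      · exact hyB.2 hy.1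
  have hSIcard : (U ∩ X).ncard ≤ (S ∩ (U ∩ X)).ncard := by
    calc (U ∩ X).ncard ≤ (F '' (S ∩ (U ∩ X))).ncard :=
          Set.ncard_le_ncard hIsub (Set.toFinite _)
    _ = (S ∩ (U ∩ X)).ncard :=
          Set.ncard_image_of_injOn (hInjX.mono (fun x hx => hSX hx.1))
  have hSsubI : S ⊆ U ∩ X := by
    have : S ∩ (U ∩ X) = S := by
      refine Set.eq_of_subset_of_ncard_le Set.inter_subset_left ?_ (Set.toFinite _)
      omega
    rw [← this]; exact Set.inter_subset_right
  have hSeqI : S = U ∩ X :=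
    Set.eq_of_subset_of_ncard_le hSsubI (by omega) (Set.toFinite _)
  have hXdiff : X \ (U ∩ X) = X \ U := by ext z; simp
  refine ⟨F, hInjX, hsingle, ?_, ?_, ?_, ?_, hInjA, ?_, ?_, hform⟩
  · intro y hy
    have : F y ∈ F '' S := ⟨y, hSeqI ▸ hy, rfl⟩
    exact hFSeq ▸ this
  · have h2 : F '' (U ∩ X) = F '' S := by rw [hSeqI]
    rw [h2, hFSeq]
  · intro b hb
    exact hBmap b (by rw [hSeqI, hXdiff]; exact hb)
  · have h1 : X \ S = X \ U := by rw [hSeqI]; exact hXdiff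
    calc F '' (X \ U) = F '' (X \ S) := by rw [h1]
    _ = X \ U := hXSeq
  · intro a ha
    exact ⟨(hA a ha).1, (hA a ha).2.1, by rw [← hFSeq]; exact (hA a ha).2.2⟩
  · rw [hFAeq, hFSeq]

end MC

namespace MC

/-- In a reduced DSM (`U ∪ X = D`), every shop is in 3-permuted form, and every
`U`-`X`-shop additionally covers `X \ U` from `U \ X`. -/
theorem reduced_DSM_three_permuted_form {D : Type} [Finite D]
    (M : Set (Shop D)) (hM : IsDSM M) (U X : Set D)
    (hU : ∃ f ∈ M, f.USurj U) (hX : ∃ f ∈ M, f.XTotal X)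
    (hUmin : ∀ U' : Set D, (∃ f ∈ M, f.USurj U') → U.ncard ≤ U'.ncard)
    (hXmin : ∀ X' : Set D, (∃ f ∈ M, f.XTotal X') → X.ncard ≤ X'.ncard)
    (hmax : ∀ U' X' : Set D, (∃ f ∈ M, f.USurj U') → (∃ f ∈ M, f.XTotal X') →
      U'.ncard = U.ncard → X'.ncard = X.ncard →
      (U' ∩ X').ncard ≤ (U ∩ X).ncard)
    (hred : U ∪ X = Set.univ) :
    (∀ f ∈ M, ∃ ζ χ υ : D → D,
      Set.BijOn ζ (U ∩ X) (U ∩ X) ∧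
      Set.BijOn χ (X \ U) (X \ U) ∧
      Set.BijOn υ (U \ X) (U \ X) ∧
      (∀ y ∈ U ∩ X, f.f y = {ζ y}) ∧
      (∀ x ∈ X \ U, f.f x = {χ x}) ∧
      (∀ u ∈ U \ X, ∃ Xu ⊆ X \ U, f.f u = insert (υ u) Xu)) ∧
    (∀ f ∈ M, f.USurj U → f.XTotal X →
      (⋃ u ∈ U \ X, f.f u) ∩ X = X \ U) := by
  classical
  have hUdiff : U \ (U ∩ X) = U \ X := by ext z; simp
  have hXdiff : X \ (U ∩ X) = X \ U := by ext z; simp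
  -- a U-X-shop h0 ∈ M
  obtain ⟨s, hs, hsU⟩ := hU
  obtain ⟨t, ht, htX⟩ := hX
  set h0 : Shop D := Shop.comp t s with hh0def
  have hh0 : h0 ∈ M := hM.2.1 s hs t ht
  have hh0U : h0.USurj U := by
    intro b
    obtain ⟨y, hy⟩ := t.surj b
    obtain ⟨w, hwU, hws⟩ := hsU y
    exact ⟨w, hwU, y, hws, hy⟩
  have hh0X : h0.XTotal X := by
    intro a
    obtain ⟨y, hy⟩ := s.total a
    obtain ⟨x, hxX, hx⟩ := htX y
    exact ⟨x, hxX, y, hy, hx⟩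
  obtain ⟨Fh, hhInjX, hhsingle, hhmapsI, hhFI, hhmapsB, hhFB, hhInjA, hhA, hhFA, hhform⟩ :=
    strucUX hM ⟨s, hs, hsU⟩ ⟨t, ht, htX⟩ hUmin hXmin hmax hred hh0 hh0U hh0X
  constructor
  · -- part 1
    intro f hf
    obtain ⟨F, S, hSX, hInjX, hsingle, hSmap, hBmap, hXSeq, hScard, hA, hInjA, hFAeq, hform⟩ :=
      struc hM ⟨s, hs, hsU⟩ ⟨t, ht, htX⟩ hUmin hXmin hmax hred hf
    set g : Shop D := Shop.comp h0 (Shop.comp f h0) with hgdef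
    have hg : g ∈ M := hM.2.1 _ (hM.2.1 h0 hh0 f hf) h0 hh0
    have hgU : g.USurj U := by
      intro b
      obtain ⟨c, hc⟩ := h0.surj b
      obtain ⟨e, he⟩ := f.surj c
      obtain ⟨w, hwU, hew⟩ := hh0U e
      exact ⟨w, hwU, c, ⟨e, hew, he⟩, hc⟩
    have hgX : g.XTotal X := by
      intro a
      obtain ⟨y, hy⟩ := h0.total a
      obtain ⟨z, hz⟩ := f.total y
      obtain ⟨x, hxX, hx⟩ := hh0X z
      exact ⟨x, hxX, z, ⟨y, hy, hz⟩, hx⟩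
    obtain ⟨Fg, hgInjX, hgsingle, hgmapsI, hgFI, hgmapsB, hgFB, hgInjA, hgA, hgFA, hgform⟩ :=
      strucUX hM ⟨s, hs, hsU⟩ ⟨t, ht, htX⟩ hUmin hXmin hmax hred hg hgU hgX
    -- key: F maps U ∩ X into U ∩ X
    have hkey : ∀ y' ∈ U ∩ X, F y' ∈ U ∩ X := by
      intro y' hy'
      obtain ⟨y, hyI, hFhy⟩ := hhFI.ge hy'
      have h0y : h0.f y = {y'} := by rw [hhsingle y hyI.2, hFhy]
      have hfy' : f.f y' = {F y'} := hsingle y' hy'.2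
      set w : D := F y' with hwdef
      have hgyw : g.f y = h0.f w := by
        ext z
        constructor
        · rintro ⟨c, ⟨e, he0, hce⟩, hzc⟩
          rw [h0y] at he0
          rw [Set.mem_singleton_iff] at he0
          subst he0
          rw [hfy'] at hce
          rw [Set.mem_singleton_iff] at hce
          subst hce
          exact hzc
        · intro hz
          refine ⟨w, ⟨y', ?_, ?_⟩, hz⟩
          · rw [h0y]; rfl
          · rw [hfy']; rfl
      have hgy : g.f y = {Fg y} := hgsingle y hyI.2
      have hFgy : Fg y ∈ U ∩ X := hgmapsI y hyI
      by_cases hwU : w ∈ U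
      · by_cases hwX : w ∈ X
        · exact ⟨hwU, hwX⟩
        · exfalso
          obtain ⟨hm, hmU⟩ := hhA w ⟨hwU, hwX⟩
          have : Fh w ∈ g.f y := hgyw ▸ hm
          rw [hgy, Set.mem_singleton_iff] at this
          exact hmU.2 (this ▸ hFgy)
      · exfalso
        have hwX : w ∈ X := by
          have : w ∈ U ∪ X := hred ▸ Set.mem_univ w
          exact this.resolve_left hwU
        have hwB : w ∈ X \ U := ⟨hwX, hwU⟩
        have hFhw : Fh w ∈ X \ U := hhmapsB w hwB
        have : Fh w ∈ g.f y := by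
          rw [hgyw, hhsingle w hwX]; rfl
        rw [hgy, Set.mem_singleton_iff] at this
        exact hFhw.2 (this ▸ hFgy).1
    -- S = U ∩ X
    have hIS : U ∩ X ⊆ S := by
      intro y hy
      by_contra hyS
      have := hBmap y ⟨hy.2, hyS⟩
      exact this.2 (hkey y hy).1
    have hSeqI : S = U ∩ X :=
      (Set.eq_of_subset_of_ncard_le hIS (by omega) (Set.toFinite _)).symm
    have hFIeq : F '' (U ∩ X) = U ∩ X := by
      have hsub : F '' (U ∩ X) ⊆ U ∩ X := by
        rintro _ ⟨y, hy, rfl⟩; exact hkey y hy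
      refine Set.eq_of_subset_of_ncard_le hsub ?_ (Set.toFinite _)
      rw [Set.ncard_image_of_injOn (hInjX.mono Set.inter_subset_right)]
    have hFSeq : F '' S = U ∩ X := by rw [hSeqI]; exact hFIeq
    have hXSB : X \ S = X \ U := by rw [hSeqI]; exact hXdiff
    refine ⟨F, F, F, ?_, ?_, ?_, ?_, ?_, ?_⟩
    · exact ⟨hkey, hInjX.mono Set.inter_subset_right, hFIeq.symm.subset⟩
    · refine ⟨?_, hInjX.mono Set.diff_subset, ?_⟩
      · intro b hb
        exact hBmap b (hXSB ▸ hb)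
      · have : F '' (X \ U) = X \ U := by
          calc F '' (X \ U) = F '' (X \ S) := by rw [hXSB]
          _ = X \ U := hXSeq
        exact this.symm.subset
    · refine ⟨?_, hInjA, ?_⟩
      · intro a ha
        have h1 := (hA a ha).2.1
        have h2 := (hA a ha).2.2
        rw [hFSeq] at h2
        refine ⟨h1, fun haX => h2 ⟨h1, haX⟩⟩
      · have : F '' (U \ X) = U \ X := by
          rw [hFAeq, hFSeq, hUdiff]
        exact this.symm.subset
    · intro y hy; exact hsingle y hy.2
    · intro x hx; exact hsingle x hx.1
    · intro u hu
      exact ⟨f.f u ∩ (X \ U), Set.inter_subset_right, hform u hu⟩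
  · -- part 2
    intro f hf hfU hfX
    obtain ⟨Ff, hfInjX, hfsingle, hfmapsI, hfFI, hfmapsB, hfFB, hfInjA, hfA, hfFA, hfform⟩ :=
      strucUX hM ⟨s, hs, hsU⟩ ⟨t, ht, htX⟩ hUmin hXmin hmax hred hf hfU hfX
    apply Set.Subset.antisymm
    · rintro z ⟨hz1, hzX⟩
      rw [Set.mem_iUnion₂] at hz1
      obtain ⟨a, ha, hza⟩ := hz1
      refine ⟨hzX, fun hzU => ?_⟩
      rw [hfform a ha, Set.mem_insert_iff] at hza
      rcases hza with rfl | ⟨_, hzB⟩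
      · exact (hfA a ha).2.2 ⟨hzU, hzX⟩
      · exact hzB.2 hzU
    · intro b hb
      obtain ⟨w, hwU, hbw⟩ := hfU b
      by_cases hwX : w ∈ X
      · exfalso
        rw [hfsingle w hwX, Set.mem_singleton_iff] at hbw
        have := hfmapsI w ⟨hwU, hwX⟩
        rw [← hbw] at this
        exact hb.2 this.1
      · refine ⟨?_, hb.1⟩
        rw [Set.mem_iUnion₂]
        exact ⟨w, ⟨hwU, hwX⟩, hbw⟩


end MC
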